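/- For every n ≥ 1 there exist θ ∈ (0, π/4) and γ₁,…,γ_n ∈ (0,1] such that for all 1 ≤ k ≤ n, 1 + (1/2)(∏_{j=1}^{k−1}(3+√(1−γ_j²))/4 − 1) + 1/2 + (1/8)·2^{2−k}(γ_k sin θ + cos θ ∏_{j=1}^{k−1}(1+√(1−γ_j²))) > 7/4. -/

import Mathlib

open Real Finset

set_option maxHeartbeats 1000000

private lemma weier (s : Finset ℕ) (f : ℕ → ℝ)
    (h0 : ∀ i ∈ s, 0 ≤ f i) (h1 : ∀ i ∈ s, f i ≤ 1) :
    1 - ∑ i ∈ s, f i ≤ ∏ i ∈ s, (1 - f i) := by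
  induction s using Finset.cons_induction with
  | empty => simp
  | cons a s ha ih =>
    rw [Finset.sum_cons, Finset.prod_cons]
    have h0a := h0 a (Finset.mem_cons_self a s)
    have h1a := h1 a (Finset.mem_cons_self a s)
    have h0' : ∀ i ∈ s, 0 ≤ f i := fun i hi => h0 i (Finset.mem_cons_of_mem hi)
    have h1' : ∀ i ∈ s, f i ≤ 1 := fun i hi => h1 i (Finset.mem_cons_of_mem hi)
    have ihs := ih h0' h1'
    have hsum : 0 ≤ ∑ i ∈ s, f i := Finset.sum_nonneg h0'
    have hprod : 0 ≤ ∏ i ∈ s, (1 - f i) :=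
      Finset.prod_nonneg (fun i hi => by linarith [h1' i hi])
    nlinarith

noncomputable def tt : ℕ → ℝ
  | 0 => 1
  | (k+1) => tt k + 4^k * (tt k)^2

lemma tt_ge_one (k : ℕ) : 1 ≤ tt k := by
  induction k with
  | zero => norm_num [tt]
  | succ k ih =>
    show 1 ≤ tt k + 4^k * (tt k)^2
    nlinarith [pow_pos (by norm_num : (0:ℝ) < 4) k]

lemma tt_mono : Monotone tt := by
  apply monotone_nat_of_le_succ
  intro k
  show tt k ≤ tt k + 4^k * (tt k)^2
  nlinarith [pow_pos (by norm_num : (0:ℝ) < 4) k, tt_ge_one k]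

lemma tt_eq (k : ℕ) : tt k = 1 + ∑ j ∈ Finset.range k, 4^j * tt j ^ 2 := by
  induction k with
  | zero => simp [tt]
  | succ k ih =>
    rw [Finset.sum_range_succ]
    show tt k + 4^k * (tt k)^2 = _
    linarith

theorem arbitrarily_many_sequential_violations (n : ℕ) (hn : 1 ≤ n) :
    ∃ θ : ℝ, θ ∈ Set.Ioo 0 (Real.pi / 4) ∧
    ∃ γ : ℕ → ℝ, (∀ k, 1 ≤ k → k ≤ n → γ k ∈ Set.Ioc (0 : ℝ) 1) ∧
      ∀ k, 1 ≤ k → k ≤ n →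
        1 + (1 / 2) * ((∏ j ∈ Finset.Icc 1 (k - 1), (3 + Real.sqrt (1 - γ j ^ 2)) / 4) - 1)
          + 1 / 2 + (1 / 8) * (2 : ℝ) ^ ((2 : ℤ) - (k : ℤ)) *
            (γ k * Real.sin θ +
              Real.cos θ * ∏ j ∈ Finset.Icc 1 (k - 1), (1 + Real.sqrt (1 - γ j ^ 2)))
          > 7 / 4 := by
  set T : ℝ := 2^n * tt n with hT
  have hTpos : 0 < T := mul_pos (pow_pos two_pos n) (by linarith [tt_ge_one n])
  have hT4 : 4 ≤ T := by
    have h1 : (2:ℝ)^1 ≤ 2^n := pow_le_pow_right₀ (by norm_num) hn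
    have h2 : tt 1 ≤ tt n := tt_mono hn
    have h3 : tt 1 = 2 := by show tt 0 + 4^0 * (tt 0)^2 = 2; show (1:ℝ) + 4^0 * 1^2 = 2; norm_num
    nlinarith [tt_ge_one n, pow_pos (two_pos (α := ℝ)) n]
  set θ : ℝ := 1 / T with hθdef
  have hθpos : 0 < θ := by positivity
  have hθle : θ ≤ 1/4 := by
    rw [hθdef, div_le_div_iff₀ hTpos (by norm_num)]; linarith
  have hθIoo : θ ∈ Set.Ioo 0 (Real.pi / 4) := by
    refine ⟨hθpos, ?_⟩
    have := Real.pi_gt_three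
    linarith
  refine ⟨θ, hθIoo, fun k => 2^k * tt k * θ, ?_, ?_⟩
  · intro k hk1 hkn
    constructor
    · have h1 := tt_ge_one k
      have h2 : (0:ℝ) < 2^k := by positivity
      positivity
    · have h1 : (2:ℝ)^k * tt k ≤ T := by
        rw [hT]
        exact mul_le_mul (pow_le_pow_right₀ (by norm_num) hkn) (tt_mono hkn)
          (by linarith [tt_ge_one k]) (by positivity)
      rw [hθdef]
      calc (2:ℝ)^k * tt k * (1/T) ≤ T * (1/T) :=
            mul_le_mul_of_nonneg_right h1 (by positivity)
        _ = 1 := by field_simp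
  · intro k hk1 hkn
    obtain ⟨m, rfl⟩ : ∃ m, k = m + 1 := ⟨k - 1, (Nat.succ_pred_eq_of_pos hk1).symm⟩
    simp only [Nat.add_sub_cancel]
    set γ : ℕ → ℝ := fun k => 2^k * tt k * θ with hγdef
    have hγapp : ∀ j : ℕ, (2:ℝ)^j * tt j * θ = γ j := fun j => rfl
    simp only [hγapp]
    -- basic facts about γ j for j in the product range
    have hγpos : ∀ j, 0 < γ j := fun j => by
      have := tt_ge_one j
      have := pow_pos (two_pos (α := ℝ)) j
      positivity
    have hγle1 : ∀ j, j ≤ n → γ j ≤ 1 := by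
      intro j hj
      have h1 : (2:ℝ)^j * tt j ≤ T := by
        rw [hT]
        exact mul_le_mul (pow_le_pow_right₀ (by norm_num) hj) (tt_mono hj)
          (by linarith [tt_ge_one j]) (by positivity)
      simp only [hγdef]
      calc (2:ℝ)^j * tt j * θ ≤ T * θ := mul_le_mul_of_nonneg_right h1 hθpos.le
        _ = 1 := by rw [hθdef]; field_simp
    have hmem : ∀ j ∈ Finset.Icc 1 m, 0 < γ j ∧ γ j ≤ 1 := by
      intro j hj
      rw [Finset.mem_Icc] at hj
      exact ⟨hγpos j, hγle1 j (by omega)⟩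
    clear_value T θ γ
    -- sqrt facts
    have hsq : ∀ j ∈ Finset.Icc 1 m,
        0 ≤ Real.sqrt (1 - γ j ^ 2) ∧ Real.sqrt (1 - γ j ^ 2) ≤ 1 ∧
        1 - γ j ^ 2 ≤ Real.sqrt (1 - γ j ^ 2) := by
      intro j hj
      obtain ⟨h0, h1⟩ := hmem j hj
      have hx : (0:ℝ) ≤ 1 - γ j ^ 2 := by nlinarith
      have hs0 := Real.sqrt_nonneg (1 - γ j ^ 2)
      have hs1 : Real.sqrt (1 - γ j ^ 2) ≤ 1 := Real.sqrt_le_one.mpr (by nlinarith)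
      have hsq2 := Real.sq_sqrt hx
      refine ⟨hs0, hs1, ?_⟩
      nlinarith
    set S : ℝ := ∑ j ∈ Finset.Icc 1 m, γ j ^ 2 with hSdef
    clear_value S
    -- product lower bound for P
    have hPge : 1 - S / 4 ≤ ∏ j ∈ Finset.Icc 1 m, (3 + Real.sqrt (1 - γ j ^ 2)) / 4 := by
      have hP := weier (Finset.Icc 1 m) (fun j => (1 - Real.sqrt (1 - γ j ^ 2)) / 4)
        (fun j hj => by obtain ⟨_, h1, _⟩ := hsq j hj; linarith)
        (fun j hj => by obtain ⟨h0, _, _⟩ := hsq j hj; linarith)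
      beta_reduce at hP
      have heq : ∏ j ∈ Finset.Icc 1 m, (1 - (1 - Real.sqrt (1 - γ j ^ 2)) / 4)
          = ∏ j ∈ Finset.Icc 1 m, (3 + Real.sqrt (1 - γ j ^ 2)) / 4 :=
        Finset.prod_congr rfl (fun j _ => by ring)
      have hsum : ∑ j ∈ Finset.Icc 1 m, (1 - Real.sqrt (1 - γ j ^ 2)) / 4 ≤ S / 4 := by
        rw [hSdef, Finset.sum_div]
        exact Finset.sum_le_sum (fun j hj => by
          obtain ⟨_, _, h2⟩ := hsq j hj; linarith)
      rw [heq] at hP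
      linarith
    set Q : ℝ := ∏ j ∈ Finset.Icc 1 m, (1 + Real.sqrt (1 - γ j ^ 2)) with hQdef
    clear_value Q
    have hcard : (Finset.Icc 1 m).card = m := by rw [Nat.card_Icc]; omega
    have hQ0 : 0 ≤ Q := by
      rw [hQdef]
      exact Finset.prod_nonneg (fun j hj => by obtain ⟨h0, _, _⟩ := hsq j hj; linarith)
    have hQle : Q ≤ 2^m := by
      rw [hQdef]
      calc ∏ j ∈ Finset.Icc 1 m, (1 + Real.sqrt (1 - γ j ^ 2))
          ≤ ∏ j ∈ Finset.Icc 1 m, 2 := Finset.prod_le_prod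
            (fun j hj => by obtain ⟨h0, _, _⟩ := hsq j hj; linarith)
            (fun j hj => by obtain ⟨_, h1, _⟩ := hsq j hj; linarith)
        _ = 2^m := by rw [Finset.prod_const, hcard]
    have hQge : (2:ℝ)^m * (1 - S / 2) ≤ Q := by
      have hP := weier (Finset.Icc 1 m) (fun j => (1 - Real.sqrt (1 - γ j ^ 2)) / 2)
        (fun j hj => by obtain ⟨_, h1, _⟩ := hsq j hj; linarith)
        (fun j hj => by obtain ⟨h0, _, _⟩ := hsq j hj; linarith)
      beta_reduce at hP
      have heq : Q = (2:ℝ)^m * ∏ j ∈ Finset.Icc 1 m,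
          (1 - (1 - Real.sqrt (1 - γ j ^ 2)) / 2) := by
        calc Q = ∏ j ∈ Finset.Icc 1 m, (1 + Real.sqrt (1 - γ j ^ 2)) := hQdef
          _ = ∏ j ∈ Finset.Icc 1 m,
              (2 * (1 - (1 - Real.sqrt (1 - γ j ^ 2)) / 2)) :=
            Finset.prod_congr rfl (fun j _ => by ring)
          _ = (∏ _j ∈ Finset.Icc 1 m, (2:ℝ)) * ∏ j ∈ Finset.Icc 1 m,
              (1 - (1 - Real.sqrt (1 - γ j ^ 2)) / 2) := Finset.prod_mul_distrib
          _ = _ := by rw [Finset.prod_const, hcard]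
      have hsum : ∑ j ∈ Finset.Icc 1 m, (1 - Real.sqrt (1 - γ j ^ 2)) / 2 ≤ S / 2 := by
        rw [hSdef, Finset.sum_div]
        exact Finset.sum_le_sum (fun j hj => by
          obtain ⟨_, _, h2⟩ := hsq j hj; linarith)
      have h2m : (0:ℝ) ≤ 2^m := by positivity
      rw [heq]
      have : 1 - S / 2 ≤ ∏ j ∈ Finset.Icc 1 m, (1 - (1 - Real.sqrt (1 - γ j ^ 2)) / 2) := by
        linarith
      exact mul_le_mul_of_nonneg_left this h2m
    -- trig bounds
    have hθ1 : θ ≤ 1 := by linarith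
    have hsin : θ / 2 ≤ Real.sin θ := by
      have h := Real.sin_gt_sub_cube hθpos
      have hθ2 : θ^2 ≤ 1/16 := by nlinarith
      have h3 : θ^3 ≤ θ * (1/16) := by
        have := mul_le_mul_of_nonneg_left hθ2 hθpos.le
        nlinarith
      nlinarith
    have hcos1 : Real.cos θ ≤ 1 := Real.cos_le_one θ
    have hcos2 : 1 - θ^2 / 2 ≤ Real.cos θ := Real.one_sub_sq_div_two_le_cos
    have hE : (0:ℝ) < 2^m := by positivity
    have hcosQ : (2:ℝ)^m * (1 - S / 2) - θ^2 / 2 * 2^m ≤ Real.cos θ * Q := by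
      nlinarith [mul_nonneg (by linarith : (0:ℝ) ≤ 1 - Real.cos θ)
        (by linarith : (0:ℝ) ≤ (2:ℝ)^m - Q),
        mul_le_mul_of_nonneg_right (by linarith : 1 - Real.cos θ ≤ θ^2/2) hE.le]
    -- gamma k term
    have hγk : γ (m+1) = 2 * 2^m * tt (m+1) * θ := by
      simp only [hγdef]; rw [pow_succ]; ring
    have hsinγ : (2:ℝ)^m * tt (m+1) * θ^2 ≤ γ (m+1) * Real.sin θ := by
      have h1 : γ (m+1) * (θ/2) ≤ γ (m+1) * Real.sin θ :=
        mul_le_mul_of_nonneg_left hsin (hγpos (m+1)).le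
      calc (2:ℝ)^m * tt (m+1) * θ^2 = γ (m+1) * (θ/2) := by rw [hγk]; ring
        _ ≤ γ (m+1) * Real.sin θ := h1
    -- S in terms of theta
    have hSeq : S = (∑ j ∈ Finset.Icc 1 m, 4^j * tt j ^ 2) * θ^2 := by
      rw [hSdef, Finset.sum_mul]
      refine Finset.sum_congr rfl (fun j _ => ?_)
      simp only [hγdef]
      have h4 : ((2:ℝ)^j)^2 = 4^j := by
        rw [← pow_mul, mul_comm j 2, pow_mul]; norm_num
      rw [← h4]; ring
    have hSig : ∑ j ∈ Finset.Icc 1 m, (4:ℝ)^j * tt j ^ 2 ≤ tt (m+1) - 1 := by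
      have hsub : Finset.Icc 1 m ⊆ Finset.range (m+1) := by
        intro j hj; rw [Finset.mem_Icc] at hj; rw [Finset.mem_range]; omega
      have := Finset.sum_le_sum_of_subset_of_nonneg hsub
        (fun j _ _ => by positivity : ∀ j ∈ Finset.range (m+1),
          j ∉ Finset.Icc 1 m → (0:ℝ) ≤ 4^j * tt j ^ 2)
      have heq := tt_eq (m+1)
      linarith
    have hS' : S ≤ (tt (m+1) - 1) * θ^2 := by
      rw [hSeq]
      exact mul_le_mul_of_nonneg_right hSig (sq_nonneg θ)
    -- the power coefficient
    have hA : (1/8 : ℝ) * (2:ℝ) ^ ((2:ℤ) - ((m+1 : ℕ) : ℤ)) = 1 / (4 * 2^m) := by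
      have h2 : ((2:ℤ) - ((m+1 : ℕ) : ℤ)) = 1 - (m:ℤ) := by push_cast; ring
      rw [h2, zpow_sub₀ (by norm_num : (2:ℝ) ≠ 0), zpow_one, zpow_natCast]
      field_simp
      ring
    -- combine X bound
    have hXge : (2:ℝ)^m * (1 - S/2 - θ^2/2 + tt (m+1) * θ^2)
        ≤ γ (m+1) * Real.sin θ + Real.cos θ * Q := by
      have : (2:ℝ)^m * (1 - S/2 - θ^2/2 + tt (m+1) * θ^2)
          = (2:ℝ)^m * tt (m+1) * θ^2 + ((2:ℝ)^m * (1 - S / 2) - θ^2 / 2 * 2^m) := by ring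
      rw [this]
      exact add_le_add hsinγ hcosQ
    have hterm : (1 - S/2 - θ^2/2 + tt (m+1) * θ^2) / 4
        ≤ (1/8 : ℝ) * (2:ℝ) ^ ((2:ℤ) - ((m+1 : ℕ) : ℤ)) *
          (γ (m+1) * Real.sin θ + Real.cos θ * Q) := by
      rw [hA]
      have h1 : 0 ≤ (1 / (4 * (2:ℝ)^m)) := by positivity
      calc (1 - S/2 - θ^2/2 + tt (m+1) * θ^2) / 4
          = (1 / (4 * 2^m)) * ((2:ℝ)^m * (1 - S/2 - θ^2/2 + tt (m+1) * θ^2)) := by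
            field_simp
        _ ≤ _ := mul_le_mul_of_nonneg_left hXge h1
    have httk := tt_ge_one (m+1)
    have hθsq : 0 < θ^2 := by positivity
    nlinarith [hterm, hPge, hS', hθsq]
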